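/- Let C ⊆ V be a dense and isolated community (threshold σ = 0) in a finite undirected graph such that min_{i∈C} deg(i) > max{deg(i) : i ∉ C, a_{iC} > 0}. Then C is an (α,β)-cluster with β = ((1−φ(C))/(2|C|))·min_{i∈C} deg(i) and α = ((1−φ(C))/(2|C|))·max{deg(i) : i ∉ C, a_{iC} > 0}, i.e., a_{iC} ≥ β|C| for all i ∈ C and a_{iC} ≤ α|C| for all i ∉ C. -/

import Mathlib

open Finset

attribute [local instance] Classical.propDecidable

/-- degree of node `i`. -/
noncomputable def w {n : ℕ} (A : Matrix (Fin n) (Fin n) ℝ) (i : Fin n) : ℝ := ∑ j, A i j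

/-- edge weight from a node to a set. -/
noncomputable def aN {n : ℕ} (A : Matrix (Fin n) (Fin n) ℝ) (i : Fin n) (C : Finset (Fin n)) : ℝ :=
  ∑ j ∈ C, A i j

/-- total edge weight inside a set. -/
noncomputable def aCC {n : ℕ} (A : Matrix (Fin n) (Fin n) ℝ) (C : Finset (Fin n)) : ℝ :=
  ∑ i ∈ C, ∑ j ∈ C, A i j

/-- volume of a set of nodes. -/
noncomputable def vol {n : ℕ} (A : Matrix (Fin n) (Fin n) ℝ) (C : Finset (Fin n)) : ℝ :=
  ∑ j ∈ C, w A j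

/-- conductance of a set. -/
noncomputable def phi {n : ℕ} (A : Matrix (Fin n) (Fin n) ℝ) (C : Finset (Fin n)) : ℝ :=
  1 - aCC A C / vol A C

/-- a dense and isolated community (threshold 0) whose minimal internal
degree exceeds the maximal degree of its external neighbors is an (α,β)-cluster with
the stated parameters. -/
theorem stmt_11 {n : ℕ} (A : Matrix (Fin n) (Fin n) ℝ)
    (hsym : ∀ i j, A i j = A j i) (h01 : ∀ i j, A i j = 0 ∨ A i j = 1)
    (hw : ∀ i, 0 < w A i)
    (C : Finset (Fin n)) (hC : C.Nonempty) (hvol : 0 < vol A C)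
    -- the dense and isolated conditions (threshold σ = 0) at the set C itself
    (hdense : ∀ i ∈ C, 2 * aN A i C / w A i > 1 - phi A C)
    (hisol : ∀ i ∉ C, 2 * aN A i C / w A i ≤ 1 - phi A C)
    -- the external neighbors of C
    (Dout : Finset (Fin n))
    (hDout : Dout = Finset.univ.filter (fun i => i ∉ C ∧ 0 < aN A i C))
    (hDne : Dout.Nonempty)
    -- degree gap
    (hgap : Dout.sup' hDne (w A) < C.inf' hC (w A))
    (β α : ℝ)
    (hβ : β = (1 - phi A C) / (2 * C.card) * C.inf' hC (w A))
    (hα : α = (1 - phi A C) / (2 * C.card) * Dout.sup' hDne (w A)) :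
    (∀ i ∈ C, β * C.card ≤ aN A i C) ∧
    (∀ i ∉ C, aN A i C ≤ α * C.card) ∧
    0 ≤ α ∧ α < β ∧ β ≤ 1 := by
  have hA0 : ∀ i j, 0 ≤ A i j := fun i j => by rcases h01 i j with h | h <;> simp [h]
  have hA1 : ∀ i j, A i j ≤ 1 := fun i j => by rcases h01 i j with h | h <;> simp [h]
  have haN0 : ∀ i, 0 ≤ aN A i C := fun i => Finset.sum_nonneg (fun j _ => hA0 i j)
  have haNcard : ∀ i, aN A i C ≤ C.card := by
    intro i
    calc aN A i C ≤ ∑ _j ∈ C, (1:ℝ) := Finset.sum_le_sum (fun j _ => hA1 i j)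
    _ = C.card := by simp
  set t : ℝ := 1 - phi A C with ht_def
  have ht_eq : t = aCC A C / vol A C := by simp [ht_def, phi]
  have ht0 : 0 ≤ t := by
    rw [ht_eq]
    exact div_nonneg (Finset.sum_nonneg fun i _ => haN0 i) hvol.le
  have hcard : (0:ℝ) < C.card := by exact_mod_cast Finset.card_pos.mpr hC
  -- for i ∈ C : t * w A i < 2 * aN A i C
  have hin : ∀ i ∈ C, t * w A i < 2 * aN A i C := by
    intro i hi
    have := hdense i hi
    rw [gt_iff_lt, lt_div_iff₀ (hw i)] at this
    linarith
  -- aN positive inside C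
  have haNpos : ∀ i ∈ C, 0 < aN A i C := by
    intro i hi
    have := hin i hi
    nlinarith [hw i, ht0]
  -- t > 0
  have ht_pos : 0 < t := by
    rw [ht_eq]
    apply div_pos _ hvol
    have : aCC A C = ∑ i ∈ C, aN A i C := rfl
    rw [this]
    exact Finset.sum_pos haNpos hC
  have hinf_le : ∀ i ∈ C, C.inf' hC (w A) ≤ w A i := fun i hi => Finset.inf'_le _ hi
  have hsup_pos : 0 < Dout.sup' hDne (w A) := by
    obtain ⟨j, hj⟩ := hDne
    exact lt_of_lt_of_le (hw j) (Finset.le_sup' _ hj)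
  -- Part 1
  have part1 : ∀ i ∈ C, β * C.card ≤ aN A i C := by
    intro i hi
    have h1 : t * C.inf' hC (w A) ≤ t * w A i :=
      mul_le_mul_of_nonneg_left (hinf_le i hi) ht0
    have h2 := hin i hi
    have hβc : β * C.card = t * C.inf' hC (w A) / 2 := by
      rw [hβ]; field_simp
    rw [hβc]
    nlinarith [h1, h2]
  have hαc : α * C.card = t * Dout.sup' hDne (w A) / 2 := by
    rw [hα]; field_simp
  -- Part 2
  have part2 : ∀ i ∉ C, aN A i C ≤ α * C.card := by
    intro i hi
    rw [hαc]
    rcases lt_or_ge 0 (aN A i C) with hpos | hle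
    · have hiD : i ∈ Dout := by rw [hDout]; simp [hi, hpos]
      have hwi : w A i ≤ Dout.sup' hDne (w A) := Finset.le_sup' _ hiD
      have := hisol i hi
      rw [div_le_iff₀ (hw i)] at this
      nlinarith
    · nlinarith [mul_nonneg ht0 hsup_pos.le]
  refine ⟨part1, part2, ?_, ?_, ?_⟩
  · rw [hα]
    positivity
  · rw [hα, hβ]
    exact mul_lt_mul_of_pos_left hgap (by positivity)
  · obtain ⟨i, hi⟩ := hC
    have := part1 i hi
    have h2 := haNcard i
    nlinarith
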